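/- Let α₀ ∈ ℂ and define on ℂ⁴ (coordinates (q₁, p₁, q₂, p₂)) the polynomials K₁ = q₁² p₁ + 3α₀ q₁ − q₂²/2 − p₂³/6 + p₁ p₂ and K₂ = p₁³/9 − (3α₀/2) q₂ p₂² + 3α₀² p₂ + α₀ p₁ q₂ + 3α₀ q₁ q₂² − (1/3) p₁² p₂² + (2/3) q₁ p₁² q₂ + (1/4) p₁ p₂⁴ + q₁² p₁ q₂² − q₁ p₁ q₂ p₂². Let V = (∂K₁/∂p₁, −∂K₁/∂q₁, ∂K₁/∂p₂, −∂K₁/∂q₂) and W = (∂K₂/∂p₁, −∂K₂/∂q₁, ∂K₂/∂p₂, −∂K₂/∂q₂) be the corresponding Hamiltonian vector fields. Then V and W commute: for every a ∈ ℂ⁴, (DW)(a)·V(a) − (DV)(a)·W(a) = 0, where DV, DW denote the Jacobian matrices. Consequently the pair of Hamiltonian flows (A1) generated by K₁ (in t) and K₂ (in s) is compatible. -/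

import Mathlib

/-- The Hamiltonian `K₁` of the autonomous system (A1), on coordinates
`(q₁,p₁,q₂,p₂) = (a 0, a 1, a 2, a 3)`. -/
noncomputable def K1 (a0 : ℂ) (a : Fin 4 → ℂ) : ℂ :=
  (a 0) ^ 2 * a 1 + 3 * a0 * a 0 - (a 2) ^ 2 / 2 - (a 3) ^ 3 / 6 + a 1 * a 3

/-- The Hamiltonian `K₂` of the autonomous system (A1). -/
noncomputable def K2 (a0 : ℂ) (a : Fin 4 → ℂ) : ℂ :=
  (a 1) ^ 3 / 9 - (3 * a0 / 2) * a 2 * (a 3) ^ 2 + 3 * a0 ^ 2 * a 3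
    + a0 * a 1 * a 2 + 3 * a0 * a 0 * (a 2) ^ 2 - (1/3) * (a 1) ^ 2 * (a 3) ^ 2
    + (2/3) * a 0 * (a 1) ^ 2 * a 2 + (1/4) * a 1 * (a 3) ^ 4
    + (a 0) ^ 2 * a 1 * (a 2) ^ 2 - a 0 * a 1 * a 2 * (a 3) ^ 2

/-- Partial derivative of a function on `ℂ⁴` in the `j`-th coordinate. -/
noncomputable def pd (K : (Fin 4 → ℂ) → ℂ) (j : Fin 4) (a : Fin 4 → ℂ) : ℂ :=
  deriv (fun s => K (Function.update a j s)) (a j)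

/-- The Hamiltonian vector field of `K₁`:
`(∂K₁/∂p₁, -∂K₁/∂q₁, ∂K₁/∂p₂, -∂K₁/∂q₂)`. -/
noncomputable def V (a0 : ℂ) (a : Fin 4 → ℂ) : Fin 4 → ℂ :=
  ![pd (K1 a0) 1 a, -pd (K1 a0) 0 a, pd (K1 a0) 3 a, -pd (K1 a0) 2 a]

/-- The Hamiltonian vector field of `K₂`. -/
noncomputable def W (a0 : ℂ) (a : Fin 4 → ℂ) : Fin 4 → ℂ :=
  ![pd (K2 a0) 1 a, -pd (K2 a0) 0 a, pd (K2 a0) 3 a, -pd (K2 a0) 2 a]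



lemma dhm (c x : ℂ) : deriv (HMul.hMul c) x = c := by
  have h : HMul.hMul c = fun s : ℂ => c * s := rfl
  rw [h]
  simpa using ((hasDerivAt_id x).const_mul c).deriv

lemma pdK1_0 (a0 : ℂ) (b : Fin 4 → ℂ) : pd (K1 a0) 0 b = 2 * b 0 * b 1 + 3 * a0 := by
  simp (disch := fun_prop) [pd, K1, Function.update, deriv_add, deriv_sub, deriv_mul,
    deriv_pow, deriv_div_const, dhm]
  all_goals ring

lemma pdK1_1 (a0 : ℂ) (b : Fin 4 → ℂ) : pd (K1 a0) 1 b = b 0 ^ 2 + b 3 := by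
  simp (disch := fun_prop) [pd, K1, Function.update, deriv_add, deriv_sub, deriv_mul,
    deriv_pow, deriv_div_const, dhm]
  all_goals ring

lemma pdK1_2 (a0 : ℂ) (b : Fin 4 → ℂ) : pd (K1 a0) 2 b = -(b 2) := by
  simp (disch := fun_prop) [pd, K1, Function.update, deriv_add, deriv_sub, deriv_mul,
    deriv_pow, deriv_div_const, dhm]
  all_goals ring

lemma pdK1_3 (a0 : ℂ) (b : Fin 4 → ℂ) : pd (K1 a0) 3 b = b 1 - b 3 ^ 2 / 2 := by
  simp (disch := fun_prop) [pd, K1, Function.update, deriv_add, deriv_sub, deriv_mul,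
    deriv_pow, deriv_div_const, dhm]
  all_goals ring

lemma pdK2_0 (a0 : ℂ) (b : Fin 4 → ℂ) : pd (K2 a0) 0 b = 3 * a0 * b 2 ^ 2 + (2/3) * b 1 ^ 2 * b 2 + 2 * b 0 * b 1 * b 2 ^ 2 - b 1 * b 2 * b 3 ^ 2 := by
  simp (disch := fun_prop) [pd, K2, Function.update, deriv_add, deriv_sub, deriv_mul,
    deriv_pow, deriv_div_const, dhm]
  all_goals ring

lemma pdK2_1 (a0 : ℂ) (b : Fin 4 → ℂ) : pd (K2 a0) 1 b = b 1 ^ 2 / 3 + a0 * b 2 - (2/3) * b 1 * b 3 ^ 2 + (4/3) * b 0 * b 1 * b 2 + b 3 ^ 4 / 4 + b 0 ^ 2 * b 2 ^ 2 - b 0 * b 2 * b 3 ^ 2 := by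
  simp (disch := fun_prop) [pd, K2, Function.update, deriv_add, deriv_sub, deriv_mul,
    deriv_pow, deriv_div_const, dhm]
  all_goals ring

lemma pdK2_2 (a0 : ℂ) (b : Fin 4 → ℂ) : pd (K2 a0) 2 b = -(3 * a0 / 2) * b 3 ^ 2 + a0 * b 1 + 6 * a0 * b 0 * b 2 + (2/3) * b 0 * b 1 ^ 2 + 2 * b 0 ^ 2 * b 1 * b 2 - b 0 * b 1 * b 3 ^ 2 := by
  simp (disch := fun_prop) [pd, K2, Function.update, deriv_add, deriv_sub, deriv_mul,
    deriv_pow, deriv_div_const, dhm]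
  all_goals ring

lemma pdK2_3 (a0 : ℂ) (b : Fin 4 → ℂ) : pd (K2 a0) 3 b = -(3 * a0) * b 2 * b 3 + 3 * a0 ^ 2 - (2/3) * b 1 ^ 2 * b 3 + b 1 * b 3 ^ 3 - 2 * b 0 * b 1 * b 2 * b 3 := by
  simp (disch := fun_prop) [pd, K2, Function.update, deriv_add, deriv_sub, deriv_mul,
    deriv_pow, deriv_div_const, dhm]
  all_goals ring


lemma V_eq (a0 : ℂ) (b : Fin 4 → ℂ) :
    V a0 b = ![b 0 ^ 2 + b 3, -(2 * b 0 * b 1 + 3 * a0), b 1 - b 3 ^ 2 / 2, -(-(b 2))] := by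
  rw [V, pdK1_0, pdK1_1, pdK1_2, pdK1_3]

lemma W_eq (a0 : ℂ) (b : Fin 4 → ℂ) :
    W a0 b = ![b 1 ^ 2 / 3 + a0 * b 2 - (2/3) * b 1 * b 3 ^ 2 + (4/3) * b 0 * b 1 * b 2 + b 3 ^ 4 / 4 + b 0 ^ 2 * b 2 ^ 2 - b 0 * b 2 * b 3 ^ 2, -(3 * a0 * b 2 ^ 2 + (2/3) * b 1 ^ 2 * b 2 + 2 * b 0 * b 1 * b 2 ^ 2 - b 1 * b 2 * b 3 ^ 2), -(3 * a0) * b 2 * b 3 + 3 * a0 ^ 2 - (2/3) * b 1 ^ 2 * b 3 + b 1 * b 3 ^ 3 - 2 * b 0 * b 1 * b 2 * b 3, -(-(3 * a0 / 2) * b 3 ^ 2 + a0 * b 1 + 6 * a0 * b 0 * b 2 + (2/3) * b 0 * b 1 ^ 2 + 2 * b 0 ^ 2 * b 1 * b 2 - b 0 * b 1 * b 3 ^ 2)] := by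
  rw [W, pdK2_0, pdK2_1, pdK2_2, pdK2_3]

lemma W0_eq (a0 : ℂ) (b : Fin 4 → ℂ) : W a0 b 0 = b 1 ^ 2 / 3 + a0 * b 2 - (2/3) * b 1 * b 3 ^ 2 + (4/3) * b 0 * b 1 * b 2 + b 3 ^ 4 / 4 + b 0 ^ 2 * b 2 ^ 2 - b 0 * b 2 * b 3 ^ 2 := by
  rw [W_eq]; simp [Matrix.cons_val_zero, Matrix.cons_val_one, Matrix.head_cons]

lemma V0_eq (a0 : ℂ) (b : Fin 4 → ℂ) : V a0 b 0 = b 0 ^ 2 + b 3 := by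
  rw [V_eq]; simp [Matrix.cons_val_zero, Matrix.cons_val_one, Matrix.head_cons]

lemma W1_eq (a0 : ℂ) (b : Fin 4 → ℂ) : W a0 b 1 = -(3 * a0 * b 2 ^ 2 + (2/3) * b 1 ^ 2 * b 2 + 2 * b 0 * b 1 * b 2 ^ 2 - b 1 * b 2 * b 3 ^ 2) := by
  rw [W_eq]; simp [Matrix.cons_val_zero, Matrix.cons_val_one, Matrix.head_cons]

lemma V1_eq (a0 : ℂ) (b : Fin 4 → ℂ) : V a0 b 1 = -(2 * b 0 * b 1 + 3 * a0) := by
  rw [V_eq]; simp [Matrix.cons_val_zero, Matrix.cons_val_one, Matrix.head_cons]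

lemma W2_eq (a0 : ℂ) (b : Fin 4 → ℂ) : W a0 b 2 = -(3 * a0) * b 2 * b 3 + 3 * a0 ^ 2 - (2/3) * b 1 ^ 2 * b 3 + b 1 * b 3 ^ 3 - 2 * b 0 * b 1 * b 2 * b 3 := by
  rw [W_eq]; simp [Matrix.cons_val_zero, Matrix.cons_val_one, Matrix.head_cons]

lemma V2_eq (a0 : ℂ) (b : Fin 4 → ℂ) : V a0 b 2 = b 1 - b 3 ^ 2 / 2 := by
  rw [V_eq]; simp [Matrix.cons_val_zero, Matrix.cons_val_one, Matrix.head_cons]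

lemma W3_eq (a0 : ℂ) (b : Fin 4 → ℂ) : W a0 b 3 = -(-(3 * a0 / 2) * b 3 ^ 2 + a0 * b 1 + 6 * a0 * b 0 * b 2 + (2/3) * b 0 * b 1 ^ 2 + 2 * b 0 ^ 2 * b 1 * b 2 - b 0 * b 1 * b 3 ^ 2) := by
  rw [W_eq]; simp [Matrix.cons_val_zero, Matrix.cons_val_one, Matrix.head_cons]

lemma V3_eq (a0 : ℂ) (b : Fin 4 → ℂ) : V a0 b 3 = -(-(b 2)) := by
  rw [V_eq]; simp [Matrix.cons_val_zero, Matrix.cons_val_one, Matrix.head_cons]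


lemma derivneg (f : ℂ → ℂ) (x : ℂ) : deriv (fun y => -f y) x = -deriv f x :=
  deriv.neg

lemma fderiv_dir (f : (Fin 4 → ℂ) → ℂ) (a v : Fin 4 → ℂ) (hf : DifferentiableAt ℂ f a) :
    fderiv ℂ f a v = deriv (fun t : ℂ => f (a + t • v)) 0 := by
  have hline : HasDerivAt (fun t : ℂ => a + t • v) v 0 := by
    simpa using ((hasDerivAt_id (0 : ℂ)).smul_const v).const_add a
  have h2 : HasFDerivAt f (fderiv ℂ f a) ((fun t : ℂ => a + t • v) 0) := by
    simpa using hf.hasFDerivAt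
  simpa [Function.comp_def] using (h2.comp_hasDerivAt 0 hline).deriv.symm


set_option maxHeartbeats 4000000 in
/-- The Hamiltonian vector fields `V` of `K₁` and `W` of `K₂`
commute: `(DW)(a)·V(a) - (DV)(a)·W(a) = 0` at every point `a ∈ ℂ⁴`, so the two
Hamiltonian flows of the autonomous system (A1) are compatible. -/
theorem stmt13 (a0 : ℂ) :
    ∀ a : Fin 4 → ℂ, ∀ i : Fin 4,
      fderiv ℂ (fun b => W a0 b i) a (V a0 a)
        - fderiv ℂ (fun b => V a0 b i) a (W a0 a) = 0 := by
  intro a i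
  fin_cases i
  · show fderiv ℂ (fun b => W a0 b 0) a (V a0 a) - fderiv ℂ (fun b => V a0 b 0) a (W a0 a) = 0
    have hw : (fun b : Fin 4 → ℂ => W a0 b 0) = fun b => b 1 ^ 2 / 3 + a0 * b 2 - (2/3) * b 1 * b 3 ^ 2 + (4/3) * b 0 * b 1 * b 2 + b 3 ^ 4 / 4 + b 0 ^ 2 * b 2 ^ 2 - b 0 * b 2 * b 3 ^ 2 :=
      funext (W0_eq a0)
    have hv : (fun b : Fin 4 → ℂ => V a0 b 0) = fun b => b 0 ^ 2 + b 3 :=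
      funext (V0_eq a0)
    rw [hw, hv, V_eq, W_eq, fderiv_dir _ _ _ (by fun_prop), fderiv_dir _ _ _ (by fun_prop)]
    simp (disch := fun_prop) only [Pi.add_apply, Pi.smul_apply, smul_eq_mul,
      Matrix.cons_val_zero, Matrix.cons_val_one, Matrix.head_cons, Matrix.cons_val_two,
      Matrix.tail_cons, Matrix.cons_val_three,
      deriv_add, deriv_sub, deriv_mul, deriv_fun_add, deriv_fun_sub, deriv_fun_mul, deriv_pow, deriv_fun_pow, deriv_div_const, deriv_const', dhm,
      deriv_id'', deriv_neg, derivneg]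
    ring
  · show fderiv ℂ (fun b => W a0 b 1) a (V a0 a) - fderiv ℂ (fun b => V a0 b 1) a (W a0 a) = 0
    have hw : (fun b : Fin 4 → ℂ => W a0 b 1) = fun b => -(3 * a0 * b 2 ^ 2 + (2/3) * b 1 ^ 2 * b 2 + 2 * b 0 * b 1 * b 2 ^ 2 - b 1 * b 2 * b 3 ^ 2) :=
      funext (W1_eq a0)
    have hv : (fun b : Fin 4 → ℂ => V a0 b 1) = fun b => -(2 * b 0 * b 1 + 3 * a0) :=
      funext (V1_eq a0)
    rw [hw, hv, V_eq, W_eq, fderiv_dir _ _ _ (by fun_prop), fderiv_dir _ _ _ (by fun_prop)]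
    simp (disch := fun_prop) only [Pi.add_apply, Pi.smul_apply, smul_eq_mul,
      Matrix.cons_val_zero, Matrix.cons_val_one, Matrix.head_cons, Matrix.cons_val_two,
      Matrix.tail_cons, Matrix.cons_val_three,
      deriv_add, deriv_sub, deriv_mul, deriv_fun_add, deriv_fun_sub, deriv_fun_mul, deriv_pow, deriv_fun_pow, deriv_div_const, deriv_const', dhm,
      deriv_id'', deriv_neg, derivneg]
    ring
  · show fderiv ℂ (fun b => W a0 b 2) a (V a0 a) - fderiv ℂ (fun b => V a0 b 2) a (W a0 a) = 0
    have hw : (fun b : Fin 4 → ℂ => W a0 b 2) = fun b => -(3 * a0) * b 2 * b 3 + 3 * a0 ^ 2 - (2/3) * b 1 ^ 2 * b 3 + b 1 * b 3 ^ 3 - 2 * b 0 * b 1 * b 2 * b 3 :=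
      funext (W2_eq a0)
    have hv : (fun b : Fin 4 → ℂ => V a0 b 2) = fun b => b 1 - b 3 ^ 2 / 2 :=
      funext (V2_eq a0)
    rw [hw, hv, V_eq, W_eq, fderiv_dir _ _ _ (by fun_prop), fderiv_dir _ _ _ (by fun_prop)]
    simp (disch := fun_prop) only [Pi.add_apply, Pi.smul_apply, smul_eq_mul,
      Matrix.cons_val_zero, Matrix.cons_val_one, Matrix.head_cons, Matrix.cons_val_two,
      Matrix.tail_cons, Matrix.cons_val_three,
      deriv_add, deriv_sub, deriv_mul, deriv_fun_add, deriv_fun_sub, deriv_fun_mul, deriv_pow, deriv_fun_pow, deriv_div_const, deriv_const', dhm,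
      deriv_id'', deriv_neg, derivneg]
    ring
  · show fderiv ℂ (fun b => W a0 b 3) a (V a0 a) - fderiv ℂ (fun b => V a0 b 3) a (W a0 a) = 0
    have hw : (fun b : Fin 4 → ℂ => W a0 b 3) = fun b => -(-(3 * a0 / 2) * b 3 ^ 2 + a0 * b 1 + 6 * a0 * b 0 * b 2 + (2/3) * b 0 * b 1 ^ 2 + 2 * b 0 ^ 2 * b 1 * b 2 - b 0 * b 1 * b 3 ^ 2) :=
      funext (W3_eq a0)
    have hv : (fun b : Fin 4 → ℂ => V a0 b 3) = fun b => -(-(b 2)) :=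
      funext (V3_eq a0)
    rw [hw, hv, V_eq, W_eq, fderiv_dir _ _ _ (by fun_prop), fderiv_dir _ _ _ (by fun_prop)]
    simp (disch := fun_prop) only [Pi.add_apply, Pi.smul_apply, smul_eq_mul,
      Matrix.cons_val_zero, Matrix.cons_val_one, Matrix.head_cons, Matrix.cons_val_two,
      Matrix.tail_cons, Matrix.cons_val_three,
      deriv_add, deriv_sub, deriv_mul, deriv_fun_add, deriv_fun_sub, deriv_fun_mul, deriv_pow, deriv_fun_pow, deriv_div_const, deriv_const', dhm,
      deriv_id'', deriv_neg, derivneg]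
    ring
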